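/- Let T be a text and (P₁, …, P_k) an occurrence partition of P with respect to T (with k ≥ 2 where relevant). Suppose P_i is replaced by at most three nonempty strings Q₁, Q₂, Q₃ each occurring in T or of length 1 (character insertion/deletion inside P_i). Then the resulting sequence can be restored to an occurrence partition (satisfying maximality) by merging at most 4 adjacent pairs: specifically, no merge can involve P_{i-2} with P_{i-1}∘X for any X, nor X∘P_{i+1} with P_{i+2}, because P_{i-2}∘P_{i-1} and P_{i+1}∘P_{i+2} do not occur in T. -/

import Mathlib

open Classical in
/-- Greedily merge adjacent pieces whose concatenation occurs in `T`. -/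
noncomputable def mergeAll {α : Type*} (T : List α) : List (List α) → List (List α)
  | [] => []
  | [a] => [a]
  | a :: b :: rest =>
    if (a ++ b) <:+: T then mergeAll T ((a ++ b) :: rest)
    else a :: mergeAll T (b :: rest)
termination_by l => l.length

theorem mergeAll_flatten {α : Type*} (T : List α) :
    ∀ l : List (List α), (mergeAll T l).flatten = l.flatten
  | [] => by rw [mergeAll]
  | [a] => by rw [mergeAll]
  | a :: b :: rest => by
    rw [mergeAll]
    split
    · rw [mergeAll_flatten T ((a ++ b) :: rest)]; simp
    · simp [mergeAll_flatten T (b :: rest)]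
termination_by l => l.length

theorem mergeAll_ne_nil {α : Type*} (T : List α) :
    ∀ l : List (List α), l ≠ [] → mergeAll T l ≠ []
  | [], h => absurd rfl h
  | [a], _ => by rw [mergeAll]; simp
  | a :: b :: rest, _ => by
    rw [mergeAll]
    split
    · exact mergeAll_ne_nil T ((a ++ b) :: rest) (by simp)
    · simp
termination_by l => l.length

theorem mergeAll_mem_ne_nil {α : Type*} (T : List α) :
    ∀ l : List (List α), (∀ Q ∈ l, Q ≠ []) → ∀ Q ∈ mergeAll T l, Q ≠ []
  | [], _ => by rw [mergeAll]; simp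
  | [a], h => by rw [mergeAll]; simpa using h
  | a :: b :: rest, h => by
    rw [mergeAll]
    split
    · refine mergeAll_mem_ne_nil T ((a ++ b) :: rest) ?_
      intro Q hQ
      rcases List.mem_cons.mp hQ with hQ | hQ
      · have ha := h a (by simp)
        simp_all
      · exact h Q (by simp [hQ])
    · intro Q hQ
      rcases List.mem_cons.mp hQ with hQ | hQ
      · subst hQ; exact h Q (by simp)
      · exact mergeAll_mem_ne_nil T (b :: rest) (fun Q hQ => h Q (by simp [hQ])) Q hQ
termination_by l => l.length

theorem mergeAll_mem_occ {α : Type*} (T : List α) :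
    ∀ l : List (List α), (∀ Q ∈ l, Q <:+: T ∨ Q.length = 1) →
      ∀ Q ∈ mergeAll T l, Q <:+: T ∨ Q.length = 1
  | [], _ => by rw [mergeAll]; simp
  | [a], h => by rw [mergeAll]; simpa using h
  | a :: b :: rest, h => by
    rw [mergeAll]
    split
    · rename_i hinf
      refine mergeAll_mem_occ T ((a ++ b) :: rest) ?_
      intro Q hQ
      rcases List.mem_cons.mp hQ with hQ | hQ
      · left; rw [hQ]; exact hinf
      · exact h Q (by simp [hQ])
    · intro Q hQ
      rcases List.mem_cons.mp hQ with hQ | hQ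
      · subst hQ; exact h Q (by simp)
      · exact mergeAll_mem_occ T (b :: rest) (fun Q hQ => h Q (by simp [hQ])) Q hQ
termination_by l => l.length

theorem mergeAll_head {α : Type*} (T : List α) :
    ∀ (a : List α) (rest : List (List α)),
      ∃ s, (mergeAll T (a :: rest)).head? = some (a ++ s)
  | a, [] => ⟨[], by rw [mergeAll]; simp⟩
  | a, b :: rest => by
    rw [mergeAll]
    split
    · obtain ⟨s, hs⟩ := mergeAll_head T (a ++ b) rest
      exact ⟨b ++ s, by rw [hs]; simp⟩
    · exact ⟨[], by simp⟩
termination_by _ rest => rest.length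

theorem mergeAll_last {α : Type*} (T : List α) :
    ∀ (a : List α) (rest : List (List α)),
      ∃ s c, (a :: rest).getLast? = some c ∧
        (mergeAll T (a :: rest)).getLast? = some (s ++ c)
  | a, [] => ⟨[], a, rfl, by rw [mergeAll]; simp⟩
  | a, b :: rest => by
    rw [mergeAll]
    split
    · obtain ⟨s, c, hc, hs⟩ := mergeAll_last T (a ++ b) rest
      cases rest with
      | nil =>
        simp only [List.getLast?_singleton, Option.some.injEq] at hc
        exact ⟨s ++ a, b, by simp, by rw [hs, ← hc]; simp⟩
      | cons d rest' =>
        refine ⟨s, c, ?_, hs⟩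
        simpa using hc
    · obtain ⟨s, c, hc, hs⟩ := mergeAll_last T b rest
      refine ⟨s, c, ?_, ?_⟩
      · rw [List.getLast?_cons_cons]; exact hc
      · exact List.mem_getLast?_cons hs
termination_by _ rest => rest.length

theorem mergeAll_chain {α : Type*} (T : List α) :
    ∀ l : List (List α),
      List.Chain' (fun a b => ¬ (a ++ b) <:+: T) (mergeAll T l)
  | [] => by rw [mergeAll]; exact List.isChain_nil
  | [a] => by rw [mergeAll]; exact List.isChain_singleton a
  | a :: b :: rest => by
    rw [mergeAll]
    split
    · exact mergeAll_chain T ((a ++ b) :: rest)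
    · rename_i hnot
      unfold List.Chain'
      rw [List.isChain_cons]
      refine ⟨?_, mergeAll_chain T (b :: rest)⟩
      intro y hy
      obtain ⟨s, hs⟩ := mergeAll_head T b rest
      rw [hs] at hy
      simp only [Option.mem_def, Option.some.injEq] at hy
      subst hy
      intro habs
      exact hnot (((a ++ b).prefix_append s).isInfix.trans (by simpa using habs))
termination_by l => l.length


theorem getE3_left {β : Type*} (l1 l2 l3 : List β) {j : ℕ} (h : j < l1.length)
    {h' : j < (l1 ++ l2 ++ l3).length} : (l1 ++ l2 ++ l3)[j] = l1[j] := by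
  rw [List.getElem_append_left (by simp only [List.length_append]; omega),
      List.getElem_append_left h]

theorem getE3_mid {β : Type*} (l1 l2 l3 : List β) {j i : ℕ} (hj : j = l1.length + i)
    (h : i < l2.length) {h' : j < (l1 ++ l2 ++ l3).length} :
    (l1 ++ l2 ++ l3)[j] = l2[i] := by
  subst hj
  rw [List.getElem_append_left (h' := by simp only [List.length_append]; omega)
        (by simp only [List.length_append]; omega),
      List.getElem_append_right (by omega)]
  congr 1
  omega

theorem getE3_right {β : Type*} (l1 l2 l3 : List β) {j i : ℕ}
    (hj : j = l1.length + l2.length + i) (h : i < l3.length)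
    {h' : j < (l1 ++ l2 ++ l3).length} : (l1 ++ l2 ++ l3)[j] = l3[i] := by
  subst hj
  rw [List.getElem_append_right (by simp only [List.length_append]; omega)]
  congr 1
  simp only [List.length_append]
  omega

/-- An occurrence partition of a pattern with respect to a text `T`:
nonempty pieces, each occurring in `T` as a contiguous substring or of length 1,
with no two adjacent pieces whose concatenation occurs in `T`. -/
def IsOccPartition {α : Type*} (T : List α) (L : List (List α)) : Prop :=
  (∀ Q ∈ L, Q ≠ []) ∧ (∀ Q ∈ L, Q <:+: T ∨ Q.length = 1) ∧
  ∀ i : ℕ, (h : i + 1 < L.length) →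
    ¬ ((L.get ⟨i, Nat.lt_of_succ_lt h⟩ ++ L.get ⟨i + 1, h⟩) <:+: T)

theorem stmt16 {α : Type*} (T : List α) (pre w suf : List (List α))
    (hw : w.length ≤ 5)
    (hne : ∀ Q ∈ pre ++ w ++ suf, Q ≠ [])
    (hocc : ∀ Q ∈ pre ++ w ++ suf, Q <:+: T ∨ Q.length = 1)
    (hmax : ∀ i : ℕ, (h : i + 1 < (pre ++ w ++ suf).length) →
      ¬ (pre.length ≤ i ∧ i + 1 < pre.length + w.length) →
      ¬ (((pre ++ w ++ suf).get ⟨i, Nat.lt_of_succ_lt h⟩ ++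
          (pre ++ w ++ suf).get ⟨i + 1, h⟩) <:+: T)) :
    ∃ w' : List (List α), w'.flatten = w.flatten ∧ w.length - 4 ≤ w'.length ∧
      IsOccPartition T (pre ++ w' ++ suf) := by
  classical
  refine ⟨mergeAll T w, mergeAll_flatten T w, ?_, ?_, ?_, ?_⟩
  · rcases eq_or_ne w [] with h | h
    · simp [h, mergeAll]
    · have h1 := mergeAll_ne_nil T w h
      have : 1 ≤ (mergeAll T w).length := by
        rw [Nat.one_le_iff_ne_zero]; simpa using h1
      omega
  · intro Q hQ
    simp only [List.mem_append] at hQ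
    rcases hQ with (hQ | hQ) | hQ
    · exact hne Q (by simp [hQ])
    · exact mergeAll_mem_ne_nil T w (fun Q hQ => hne Q (by simp [hQ])) Q hQ
    · exact hne Q (by simp [hQ])
  · intro Q hQ
    simp only [List.mem_append] at hQ
    rcases hQ with (hQ | hQ) | hQ
    · exact hocc Q (by simp [hQ])
    · exact mergeAll_mem_occ T w (fun Q hQ => hocc Q (by simp [hQ])) Q hQ
    · exact hocc Q (by simp [hQ])
  · -- maximality
    have hmax' : ∀ i : ℕ, (h : i + 1 < (pre ++ w ++ suf).length) →
        ¬ (pre.length ≤ i ∧ i + 1 < pre.length + w.length) →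
        ¬ (((pre ++ w ++ suf)[i]'(Nat.lt_of_succ_lt h) ++ (pre ++ w ++ suf)[i+1]'h)
          <:+: T) := by
      intro i h hex
      simpa using hmax i h hex
    have key : List.Chain' (fun a b => ¬ (a ++ b) <:+: T)
        (pre ++ (mergeAll T w ++ suf)) := by
      unfold List.Chain'
      rw [List.isChain_append]
      refine ⟨?_, ?_, ?_⟩
      · -- Chain' on pre
        rw [List.isChain_iff_getElem]
        intro i hi
        have h1 : i + 1 < (pre ++ w ++ suf).length := by
          simp only [List.length_append]; omega
        have hk := hmax' i h1 (by omega)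
        rw [← getE3_left pre w suf (by omega) (h' := Nat.lt_of_succ_lt h1),
            ← getE3_left pre w suf (by omega) (h' := h1)]
        exact hk
      · -- Chain' on mergeAll T w ++ suf
        rw [List.isChain_append]
        refine ⟨mergeAll_chain T w, ?_, ?_⟩
        · -- Chain' on suf
          rw [List.isChain_iff_getElem]
          intro i hi
          have h1 : pre.length + w.length + i + 1 < (pre ++ w ++ suf).length := by
            simp only [List.length_append]; omega
          have hk := hmax' (pre.length + w.length + i) h1 (by omega)
          rw [← getE3_right pre w suf rfl (i := i) (by omega)
                (h' := Nat.lt_of_succ_lt h1),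
              ← getE3_right pre w suf (by omega) (i := i + 1) (by omega) (h' := h1)]
          exact hk
        · -- boundary: last of mergeAll w / head of suf
          intro x hx y hy
          cases w with
          | nil => rw [show mergeAll T ([] : List (List α)) = [] from by rw [mergeAll]] at hx; simp at hx
          | cons a rest =>
            obtain ⟨s, c, hc, hs⟩ := mergeAll_last T a rest
            rw [hs] at hx
            obtain rfl : s ++ c = x := by simpa using hx
            obtain ⟨z, zs, rfl⟩ : ∃ z zs, suf = z :: zs := by
              cases suf with
              | nil => simp at hy
              | cons z zs => exact ⟨z, zs, rfl⟩
            have hclast : (a :: rest).getLast (by simp) = c := by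
              have h2 := List.getLast?_eq_getLast (l := a :: rest) (by simp)
              rw [hc] at h2
              exact (Option.some.inj h2).symm
            have h1 : pre.length + rest.length + 1 < (pre ++ (a :: rest) ++ (z :: zs)).length := by
              simp only [List.length_append, List.length_cons]; omega
            have hk := hmax' (pre.length + rest.length) h1
              (by simp only [List.length_cons]; omega)
            have e1 : (pre ++ (a :: rest) ++ (z :: zs))[pre.length + rest.length]'(Nat.lt_of_succ_lt h1) = c := by
              rw [getE3_mid pre (a :: rest) (z :: zs) rfl (by simp)]
              rw [← hclast, List.getLast_eq_getElem]
              simp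
            have e2 : (pre ++ (a :: rest) ++ (z :: zs))[pre.length + rest.length + 1]'h1 = z := by
              rw [getE3_right pre (a :: rest) (z :: zs)
                (by simp only [List.length_cons]; omega) (i := 0) (by simp)]
              rfl
            rw [e1, e2] at hk
            obtain rfl : z = y := by simpa using hy
            intro habs
            exact hk ((List.suffix_append s (c ++ z)).isInfix.trans
              (by simpa [List.append_assoc] using habs))
      · -- boundary: last of pre / head of (mergeAll w ++ suf)
        intro x hx y hy
        have hpne : pre ≠ [] := by rintro rfl; simp at hx
        have hplen : 0 < pre.length := List.length_pos_iff.mpr hpne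
        obtain rfl : pre.getLast hpne = x := by
          rw [List.getLast?_eq_getLast (l := pre) hpne] at hx
          simpa using hx
        cases w with
        | nil =>
          rw [show mergeAll T ([] : List (List α)) = [] from by rw [mergeAll],
            List.nil_append] at hy
          obtain ⟨z, zs, rfl⟩ : ∃ z zs, suf = z :: zs := by
            cases suf with
            | nil => simp at hy
            | cons z zs => exact ⟨z, zs, rfl⟩
          have h1 : (pre.length - 1) + 1 < (pre ++ ([] : List (List α)) ++ (z :: zs)).length := by
            simp only [List.length_append, List.length_cons, List.length_nil]; omega
          have hk := hmax' (pre.length - 1) h1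
            (by simp only [List.length_nil]; omega)
          have e1 : (pre ++ ([] : List (List α)) ++ (z :: zs))[pre.length - 1]'(Nat.lt_of_succ_lt h1) = pre.getLast hpne := by
            rw [getE3_left pre _ _ (by omega), List.getLast_eq_getElem]
          have e2 : (pre ++ ([] : List (List α)) ++ (z :: zs))[(pre.length - 1) + 1]'h1 = z := by
            rw [getE3_right pre ([] : List (List α)) (z :: zs)
              (by simp only [List.length_nil]; omega) (i := 0) (by simp)]
            rfl
          rw [e1, e2] at hk
          obtain rfl : z = y := by simpa using hy
          exact hk
        | cons a rest =>
          obtain ⟨s, hs⟩ := mergeAll_head T a rest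
          rw [List.head?_append, hs] at hy
          obtain rfl : a ++ s = y := by simpa using hy
          have h1 : (pre.length - 1) + 1 < (pre ++ (a :: rest) ++ suf).length := by
            simp only [List.length_append, List.length_cons]; omega
          have hk := hmax' (pre.length - 1) h1
            (by simp only [List.length_cons]; omega)
          have e1 : (pre ++ (a :: rest) ++ suf)[pre.length - 1]'(Nat.lt_of_succ_lt h1) = pre.getLast hpne := by
            rw [getE3_left pre _ _ (by omega), List.getLast_eq_getElem]
          have e2 : (pre ++ (a :: rest) ++ suf)[(pre.length - 1) + 1]'h1 = a := by
            rw [getE3_mid pre (a :: rest) suf (by omega) (i := 0) (by simp)]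
            rfl
          rw [e1, e2] at hk
          intro habs
          exact hk (((pre.getLast hpne ++ a).prefix_append s).isInfix.trans
            (by simpa [List.append_assoc] using habs))
    rw [← List.append_assoc] at key
    unfold List.Chain' at key
    rw [List.isChain_iff_getElem] at key
    intro i h
    exact key i (by omega)
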